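/- Let x : Fin N → ℝ be canonical with N ≥ 3, and let j be an inner vertex (0 < j < N-1) attaining the minimum of x over the inner indices. Then j has degree exactly 2 in HVG(x), with neighbors j-1 and j+1. -/

import Mathlib

/-- The horizontal visibility graph of a sequence `x : Fin N → ℝ`:
`a < b` are adjacent iff `x k < min (x a) (x b)` for all `a < k < b`. -/
def HVG {N : ℕ} (x : Fin N → ℝ) : SimpleGraph (Fin N) where
  Adj a b := (a < b ∧ ∀ k, a < k → k < b → x k < min (x a) (x b)) ∨
             (b < a ∧ ∀ k, b < k → k < a → x k < min (x b) (x a))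
  symm := ⟨by intro a b h; tauto⟩
  loopless := ⟨by intro a h; rcases h with ⟨h, -⟩ | ⟨h, -⟩ <;> exact lt_irrefl a h⟩

/-- Degree of a vertex in the HVG. -/
noncomputable def hvgDegree {N : ℕ} (x : Fin N → ℝ) (v : Fin N) : ℕ :=
  Nat.card {w : Fin N // (HVG x).Adj v w}

theorem hvg_inner_min_degree_two {N : ℕ} (hN : 3 ≤ N) (x : Fin N → ℝ)
    (hmax : ∀ k : Fin N, 0 < (k : ℕ) → (k : ℕ) < N - 1 →
      x k < min (x ⟨0, by omega⟩) (x ⟨N - 1, by omega⟩))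
    (hinj : ∀ k l : Fin N, 0 < (k : ℕ) → (k : ℕ) < N - 1 →
      0 < (l : ℕ) → (l : ℕ) < N - 1 → x k = x l → k = l)
    (j : Fin N) (hj0 : 0 < (j : ℕ)) (hjN : (j : ℕ) < N - 1)
    (hjmin : ∀ k : Fin N, 0 < (k : ℕ) → (k : ℕ) < N - 1 → x j ≤ x k) :
    hvgDegree x j = 2 ∧
      (∀ w : Fin N, (HVG x).Adj j w ↔
        (w = ⟨(j : ℕ) - 1, by omega⟩ ∨ w = ⟨(j : ℕ) + 1, by omega⟩)) := by
  have hjlt : (j : ℕ) < N - 1 := hjN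
  set wm : Fin N := ⟨(j : ℕ) - 1, by omega⟩ with hwm
  set wp : Fin N := ⟨(j : ℕ) + 1, by omega⟩ with hwp
  have hiff : ∀ w : Fin N, (HVG x).Adj j w ↔ (w = wm ∨ w = wp) := by
    intro w
    constructor
    · rintro (⟨hlt, hall⟩ | ⟨hlt, hall⟩)
      · -- j < w
        by_cases hw : (w : ℕ) = (j : ℕ) + 1
        · right; exact Fin.ext hw
        · exfalso
          have hjw : (j : ℕ) < (w : ℕ) := hlt
          have h1 : (j : ℕ) + 1 < (w : ℕ) := by omega
          have h2 : (HVG x).Adj j w := Or.inl ⟨hlt, hall⟩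
          have hk := hall wp (by simpa [Fin.lt_def, hwp]) (by simpa [Fin.lt_def, hwp] using h1)
          have hinner1 : 0 < (wp : ℕ) := by simp [hwp]
          have hinner2 : (wp : ℕ) < N - 1 := by
            have : (w : ℕ) ≤ N - 1 := by omega
            simp [hwp]; omega
          have := hjmin wp hinner1 hinner2
          have := min_le_left (x j) (x w)
          linarith [hk]
      · -- w < j
        by_cases hw : (w : ℕ) = (j : ℕ) - 1
        · left; exact Fin.ext hw
        · exfalso
          have hjw : (w : ℕ) < (j : ℕ) := hlt
          have h1 : (w : ℕ) < (j : ℕ) - 1 := by omega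
          have hk := hall wm (by simp [Fin.lt_def, hwm]; omega) (by simp [Fin.lt_def, hwm]; omega)
          have hinner1 : 0 < (wm : ℕ) := by simp [hwm]; omega
          have hinner2 : (wm : ℕ) < N - 1 := by simp [hwm]; omega
          have := hjmin wm hinner1 hinner2
          have := min_le_right (x w) (x j)
          linarith [hk]
    · have hvm : (wm : ℕ) = (j : ℕ) - 1 := rfl
      have hvp : (wp : ℕ) = (j : ℕ) + 1 := rfl
      rintro (rfl | rfl)
      · refine Or.inr ⟨Fin.lt_def.mpr (by omega), ?_⟩
        intro k hk1 hk2
        exfalso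
        rw [Fin.lt_def] at hk1 hk2
        omega
      · refine Or.inl ⟨Fin.lt_def.mpr (by omega), ?_⟩
        intro k hk1 hk2
        exfalso
        rw [Fin.lt_def] at hk1 hk2
        omega
  refine ⟨?_, hiff⟩
  have hne : wm ≠ wp := by
    intro h
    have h2 : (wm : ℕ) = (wp : ℕ) := congrArg Fin.val h
    have hvm : (wm : ℕ) = (j : ℕ) - 1 := rfl
    have hvp : (wp : ℕ) = (j : ℕ) + 1 := rfl
    omega
  have hset : {w : Fin N | (HVG x).Adj j w} = {wm, wp} := by
    ext w; simp [Set.mem_setOf_eq, hiff w]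
  show Nat.card {w : Fin N // (HVG x).Adj j w} = 2
  have key : Nat.card ↥({w : Fin N | (HVG x).Adj j w}) = 2 := by
    rw [Nat.card_coe_set_eq, hset, Set.ncard_pair hne]
  exact key
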